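/- arXiv:2002.11369 — 2 statements merged into one kernel-verified Lean document; each statement's English description precedes it below -/
import Mathlib

section
/- (Scaling relation for the Gaussian likelihood, second natural parameter.) Define ℓ(x, η₁, η₂) := η₁·x + η₂·x² + η₁²/(4·η₂) + (1/2)·Real.log(−2·η₂). Then for every x ∈ ℝ, η₁ ∈ ℝ, η₂ < 0, ω > 0, and every natural number j ≥ 1, the j-th derivative of the function t ↦ ℓ(ω·x, η₁/ω, t) at the point η₂/ω² equals ω^(2j) times the j-th derivative of the function t ↦ ℓ(x, η₁, t) at the point η₂. -/
/-- The Gaussian log-likelihood in natural parameters. -/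
noncomputable def gaussLogLik (x η₁ η₂ : ℝ) : ℝ :=
  η₁ * x + η₂ * x ^ 2 + η₁ ^ 2 / (4 * η₂) + (1 / 2) * Real.log (-2 * η₂)

private lemma gauss_deriv_base (A X c : ℝ) {t : ℝ} (ht : t ≠ 0) :
    HasDerivAt (fun s : ℝ => A + s * X + c / s + (1 / 2) * Real.log (-2 * s))
      (0 + 1 * X + c * (-(t ^ 2)⁻¹) + (1 / 2) * ((-2 * t)⁻¹ * (-2 * 1))) t := by
  have h1 : HasDerivAt (fun _ : ℝ => A) 0 t := hasDerivAt_const t A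
  have h2 : HasDerivAt (fun s : ℝ => s * X) (1 * X) t := (hasDerivAt_id t).mul_const X
  have h3 : HasDerivAt (fun s : ℝ => c / s) (c * (-(t ^ 2)⁻¹)) t := by
    simpa [div_eq_mul_inv] using (hasDerivAt_inv ht).const_mul c
  have hlin : HasDerivAt (fun s : ℝ => -2 * s) (-2 * 1) t := (hasDerivAt_id t).const_mul (-2)
  have hne : (-2 : ℝ) * t ≠ 0 := by
    simp [ht]
  have h4 : HasDerivAt (fun s : ℝ => Real.log (-2 * s)) ((-2 * t)⁻¹ * (-2 * 1)) t :=
    (Real.hasDerivAt_log hne).comp t hlin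
  exact ((h1.add h2).add h3).add (h4.const_mul (1 / 2))

private lemma gauss_iteratedDeriv (A X c : ℝ) (k : ℕ) :
    ∀ t : ℝ, t < 0 →
      iteratedDeriv (k + 1) (fun s : ℝ => A + s * X + c / s + (1 / 2) * Real.log (-2 * s)) t =
        (if k = 0 then X else 0) + c * (-1) ^ (k + 1) * (k + 1).factorial / t ^ (k + 2)
          + (1 / 2) * ((-1) ^ k * k.factorial / t ^ (k + 1)) := by
  induction k with
  | zero =>
    intro t ht
    have ht' : t ≠ 0 := ne_of_lt ht
    rw [iteratedDeriv_one, (gauss_deriv_base A X c ht').deriv]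
    field_simp
    simp only [↓reduceIte, zero_add, pow_one, Nat.factorial_zero, Nat.factorial_one, Nat.cast_one]
    ring
  | succ k IH =>
    intro t ht
    have ht' : t ≠ 0 := ne_of_lt ht
    rw [iteratedDeriv_succ]
    have hev : iteratedDeriv (k + 1)
        (fun s : ℝ => A + s * X + c / s + (1 / 2) * Real.log (-2 * s)) =ᶠ[nhds t]
        (fun s : ℝ => (if k = 0 then X else 0)
          + c * (-1) ^ (k + 1) * (k + 1).factorial / s ^ (k + 2)
          + (1 / 2) * ((-1) ^ k * k.factorial / s ^ (k + 1))) := by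
      filter_upwards [Iio_mem_nhds ht] with s hs
      exact IH s hs
    rw [hev.deriv_eq]
    -- derivative of the explicit formula
    have hc : HasDerivAt (fun _ : ℝ => (if k = 0 then X else 0)) 0 t := hasDerivAt_const _ _
    have hp1 : HasDerivAt (fun s : ℝ => c * (-1) ^ (k + 1) * (k + 1).factorial / s ^ (k + 2))
        (c * (-1) ^ (k + 1) * (k + 1).factorial *
          (-(((k : ℝ) + 2) * t ^ (k + 1)) / (t ^ (k + 2)) ^ 2)) t := by
      have hpow : HasDerivAt (fun s : ℝ => s ^ (k + 2))
          (((k : ℝ) + 2) * t ^ (k + 1)) t := by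
        simpa using hasDerivAt_pow (k + 2) t
      have := (hpow.inv (pow_ne_zero _ ht')).const_mul
        (c * (-1) ^ (k + 1) * ((k + 1).factorial : ℝ))
      simpa [div_eq_mul_inv, mul_assoc] using this
    have hp2 : HasDerivAt (fun s : ℝ => (1 / 2) * ((-1) ^ k * k.factorial / s ^ (k + 1)))
        ((1 / 2) * ((-1) ^ k * k.factorial *
          (-(((k : ℝ) + 1) * t ^ k) / (t ^ (k + 1)) ^ 2))) t := by
      have hpow : HasDerivAt (fun s : ℝ => s ^ (k + 1))
          (((k : ℝ) + 1) * t ^ k) t := by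
        simpa using hasDerivAt_pow (k + 1) t
      have := (hpow.inv (pow_ne_zero _ ht')).const_mul
        ((1 / 2) * ((-1 : ℝ) ^ k * k.factorial))
      simpa [div_eq_mul_inv, mul_assoc] using this
    rw [(show HasDerivAt (fun s : ℝ => (if k = 0 then X else 0)
        + c * (-1) ^ (k + 1) * (k + 1).factorial / s ^ (k + 2)
        + (1 / 2) * ((-1) ^ k * k.factorial / s ^ (k + 1))) _ t from (hc.add hp1).add hp2).deriv]
    have hfac : ((k + 2).factorial : ℝ) = ((k : ℝ) + 2) * (k + 1).factorial := by
      push_cast [Nat.factorial_succ]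
      ring
    have hfac' : ((k + 1).factorial : ℝ) = ((k : ℝ) + 1) * k.factorial := by
      push_cast [Nat.factorial_succ]
      ring
    simp only [Nat.succ_ne_zero, if_false, hfac, hfac']
    field_simp
    ring

/-- (Scaling relation for the Gaussian likelihood, second natural parameter.)
For `j ≥ 1`, the `j`-th derivative in `η̃₂ = η₂/ω²` of the scaled log-likelihood equals
`ω^(2j)` times the `j`-th derivative in `η₂` of the original log-likelihood. -/
theorem gauss_scaling_second_natural_param
    (x η₁ η₂ ω : ℝ) (hη₂ : η₂ < 0) (hω : 0 < ω) (j : ℕ) (hj : 1 ≤ j) :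
    iteratedDeriv j (fun t : ℝ => gaussLogLik (ω * x) (η₁ / ω) t) (η₂ / ω ^ 2) =
      ω ^ (2 * j) * iteratedDeriv j (fun t : ℝ => gaussLogLik x η₁ t) η₂ := by
  obtain ⟨k, rfl⟩ : ∃ k, j = k + 1 := ⟨j - 1, (Nat.succ_pred_eq_of_pos hj).symm⟩
  have hω' : ω ≠ 0 := ne_of_gt hω
  have hη₂' : η₂ ≠ 0 := ne_of_lt hη₂
  have hfun : ∀ y η : ℝ, (fun t : ℝ => gaussLogLik y η t) =
      fun s : ℝ => η * y + s * y ^ 2 + (η ^ 2 / 4) / s + (1 / 2) * Real.log (-2 * s) := by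
    intro y η
    funext s
    simp only [gaussLogLik]
    ring_nf
  have hteg : η₂ / ω ^ 2 < 0 := div_neg_of_neg_of_pos hη₂ (by positivity)
  rw [hfun (ω * x) (η₁ / ω), hfun x η₁,
    gauss_iteratedDeriv _ _ _ k _ hteg, gauss_iteratedDeriv _ _ _ k _ hη₂]
  have hifte : (if k = 0 then (ω * x) ^ 2 else 0) =
      ω ^ (2 * (k + 1)) * (if k = 0 then x ^ 2 else 0) := by
    by_cases hk : k = 0 <;> simp [hk]; ring
  rw [hifte]
  have hpω : ω ^ (2 * (k + 1)) = (ω ^ 2) ^ (k + 1) := by rw [← pow_mul]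
  rw [hpω, div_pow, div_pow]
  set I := (if k = 0 then x ^ 2 else 0) with hI
  field_simp
  have hωω : ω ^ 2 * ω ^ (k * 2) * ω⁻¹ ^ 2 * ω⁻¹ ^ (k * 2) = 1 := by
    rw [show ω ^ 2 * ω ^ (k * 2) * ω⁻¹ ^ 2 * ω⁻¹ ^ (k * 2) = (ω * ω⁻¹) ^ 2 * (ω * ω⁻¹) ^ (k * 2) by ring,
      mul_inv_cancel₀ hω']
    simp
  linear_combination (-(ω ^ 2 * η₂ ^ 3 * η₂ ^ (k * 2) * (k.factorial : ℝ) * (-1) ^ k * 4)) * hωω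
end

section
/- (Scaling relation for the Gamma likelihood, second natural parameter.) Define ℓ(x, η₁, η₂) := η₁·Real.log x + η₂·x − Real.log (Real.Gamma (η₁+1)) + (η₁+1)·Real.log(−η₂). Then for every x > 0, η₁ > −1, η₂ < 0, ω > 0, and every natural number j ≥ 1, the j-th derivative of the function t ↦ ℓ(ω·x, η₁, t) at the point η₂/ω equals ω^j times the j-th derivative of the function t ↦ ℓ(x, η₁, t) at the point η₂. -/
/-- The Gamma log-likelihood in natural parameters. -/
noncomputable def gammaLogLik (x η₁ η₂ : ℝ) : ℝ :=
  η₁ * Real.log x + η₂ * x - Real.log (Real.Gamma (η₁ + 1)) + (η₁ + 1) * Real.log (-η₂)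

/-- Explicit formula for iterated derivatives of `t ↦ a + t*b + c * log(-t)` at negative points. -/
lemma gammaAux (a b c : ℝ) : ∀ j : ℕ, ∀ s : ℝ, s < 0 →
    iteratedDeriv (j + 1) (fun t : ℝ => a + t * b + c * Real.log (-t)) s
      = (if j = 0 then b else 0) + c * (-1) ^ j * j.factorial * s ^ (-(j : ℤ) - 1) := by
  have hfe : (fun t : ℝ => a + t * b + c * Real.log (-t))
      = fun t : ℝ => a + t * b + c * Real.log t := by
    funext t; rw [Real.log_neg_eq_log]
  intro j
  induction j with
  | zero =>
    intro s hs
    rw [iteratedDeriv_one, hfe]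
    have h : HasDerivAt (fun t : ℝ => a + t * b + c * Real.log t) (0 + 1 * b + c * s⁻¹) s := by
      exact ((hasDerivAt_const s a).add ((hasDerivAt_id s).mul_const b)).add
        ((Real.hasDerivAt_log hs.ne).const_mul c)
    rw [h.deriv]
    simp
  | succ k ih =>
    intro s hs
    rw [iteratedDeriv_succ]
    have hev : iteratedDeriv (k + 1) (fun t : ℝ => a + t * b + c * Real.log (-t))
        =ᶠ[nhds s] fun u => (if k = 0 then b else 0) + c * (-1) ^ k * k.factorial * u ^ (-(k : ℤ) - 1) := by
      filter_upwards [Iio_mem_nhds hs] with u hu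
      exact ih u hu
    rw [hev.deriv_eq]
    have h : HasDerivAt (fun u : ℝ => (if k = 0 then b else 0) + c * (-1) ^ k * k.factorial * u ^ (-(k : ℤ) - 1))
        (0 + c * (-1) ^ k * k.factorial * (((-(k : ℤ) - 1 : ℤ) : ℝ) * s ^ (-(k : ℤ) - 1 - 1))) s := by
      exact (hasDerivAt_const s _).add ((hasDerivAt_zpow (-(k : ℤ) - 1) s (Or.inl hs.ne)).const_mul _)
    rw [h.deriv]
    have : (k + 1 : ℕ) ≠ 0 := k.succ_ne_zero
    simp only [this, if_neg this, Nat.factorial_succ]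
    push_cast
    have hexp : (-(k : ℤ) - 1 - 1) = (-((k : ℤ) + 1) - 1) := by ring
    rw [hexp]
    ring

/-- (Scaling relation for the Gamma likelihood, second natural parameter.)
For `j ≥ 1`, the `j`-th derivative in `η̃₂ = η₂/ω` of the scaled log-likelihood equals
`ω^j` times the `j`-th derivative in `η₂` of the original log-likelihood. -/
theorem gamma_scaling_second_natural_param
    (x η₁ η₂ ω : ℝ) (hx : 0 < x) (hη₁ : -1 < η₁) (hη₂ : η₂ < 0) (hω : 0 < ω)
    (j : ℕ) (hj : 1 ≤ j) :
    iteratedDeriv j (fun t : ℝ => gammaLogLik (ω * x) η₁ t) (η₂ / ω) =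
      ω ^ j * iteratedDeriv j (fun t : ℝ => gammaLogLik x η₁ t) η₂ := by
  obtain ⟨k, rfl⟩ : ∃ k, j = k + 1 := ⟨j - 1, (Nat.succ_pred_eq_of_pos hj).symm⟩
  have h1 : (fun t : ℝ => gammaLogLik (ω * x) η₁ t)
      = fun t : ℝ => (η₁ * Real.log (ω * x) - Real.log (Real.Gamma (η₁ + 1)))
          + t * (ω * x) + (η₁ + 1) * Real.log (-t) := by
    funext t; simp only [gammaLogLik]; ring
  have h2 : (fun t : ℝ => gammaLogLik x η₁ t)
      = fun t : ℝ => (η₁ * Real.log x - Real.log (Real.Gamma (η₁ + 1)))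
          + t * x + (η₁ + 1) * Real.log (-t) := by
    funext t; simp only [gammaLogLik]; ring
  have hs1 : η₂ / ω < 0 := div_neg_of_neg_of_pos hη₂ hω
  rw [h1, h2, gammaAux _ _ _ k _ hs1, gammaAux _ _ _ k _ hη₂]
  have hinv : ((ω : ℝ) ^ (-(k : ℤ) - 1))⁻¹ = ω ^ (k + 1) := by
    rw [← zpow_neg]
    have : (-(-(k : ℤ) - 1)) = ((k + 1 : ℕ) : ℤ) := by push_cast; ring
    rw [this, zpow_natCast]
  rw [div_zpow, div_eq_mul_inv, hinv]
  split_ifs with h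
  · subst h; ring
  · ring
end
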